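/- (Theorem 2, accuracy–sparsity trade-off of Binary Matching Pursuit.) Let E be a finite-dimensional real inner product space, fix X ∈ E, and define F(W) = (1/2)‖X − W‖². Let 𝔸 ⊆ E be a nonempty compact symmetric set of atoms, with atomic norm ‖W‖_𝔸 = inf{ Σ_M |c_M| : W = Σ_M c_M M, a finite linear combination of atoms M ∈ 𝔸 }. Let μ ∈ (0,1] and β > 0 with ‖Δ‖ ≤ √β · ‖Δ‖_𝔸 for all Δ in the span of 𝔸, and let (W^k) be the Binary Matching Pursuit iterates: W^0 = 0, A^0 = ∅, and for each k ≥ 1 an atom M^k ∈ 𝔸 with ⟨∇F(W^{k−1}), M^k⟩ ≤ μ · min_{M ∈ 𝔸} ⟨∇F(W^{k−1}), M⟩, A^k = A^{k−1} ∪ {M^k}, and W^k minimizing F over the span of A^k. Suppose W* = Σ_{M ∈ Ā} c*_M M for a finite subset Ā ⊆ 𝔸 of size K̄, where c* is the minimizer of the function f(c) = F(Σ_{M ∈ Ā} c_M M) on ℝ^{Ā}, and suppose f is γ-strongly convex for some γ > 0. Then for every K ≥ 1, F(W^K) − F(W*) ≤ (2β‖X‖²/(γμ²)) · (K̄/K).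 -/

import Mathlib

open scoped RealInnerProductSpace

/-- The atomic norm of `W` w.r.t. an atom set `A`: the infimum of `ℓ1` norms of
coefficient vectors over all finite representations of `W` as linear combinations of
atoms in `A`. -/
noncomputable def atomicNorm {E : Type*} [NormedAddCommGroup E] [InnerProductSpace ℝ E]
    (A : Set E) (W : E) : ℝ :=
  sInf {s : ℝ | ∃ (n : ℕ) (c : Fin n → ℝ) (M : Fin n → E),
    (∀ i, M i ∈ A) ∧ W = ∑ i, c i • M i ∧ s = ∑ i, |c i|}

lemma quad_zero' (c n : ℝ) (hn : 0 ≤ n) (h : ∀ t : ℝ, 0 ≤ t * c + t ^ 2 / 2 * n) : c = 0 := by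
  set t := -c / (n + 1) with ht
  have hpos : (0:ℝ) < n + 1 := by linarith
  have hc : c = -(t * (n + 1)) := by rw [ht, div_mul_cancel₀ _ hpos.ne']; ring
  have key := h t
  rw [hc] at key
  have ht2 : t ^ 2 ≤ 0 := by nlinarith [sq_nonneg t, key]
  have : t = 0 := by nlinarith [sq_nonneg t]
  rw [hc, this]; ring

lemma Fexp' {E : Type*} [NormedAddCommGroup E] [InnerProductSpace ℝ E]
    (X : E) (F : E → ℝ) (hF : ∀ W, F W = (1 / 2) * ‖X - W‖ ^ 2) (u v : E) :
    F v = F u + ⟪u - X, v - u⟫ + (1/2) * ‖v - u‖ ^ 2 := by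
  rw [hF, hF]
  have h1 : X - v = (X - u) - (v - u) := by abel
  rw [h1, @norm_sub_sq_real]
  have h2 : ⟪u - X, v - u⟫ = -⟪X - u, v - u⟫ := by
    rw [show u - X = -(X - u) by abel, inner_neg_left]
  rw [h2]; ring

set_option maxHeartbeats 1600000 in
/-- Theorem 2 (accuracy–sparsity trade-off of Binary Matching Pursuit): if
`W* = Σ_{i} c*_i M_i` is a `K̄`-atom representation whose coefficient objective
`f(c) = F(Σ_i c_i M_i)` is `γ`-strongly convex with minimizer `c*`, then the Binary
Matching Pursuit iterates satisfy `F(W^K) − F(W*) ≤ (2β‖X‖²/(γμ²))·(K̄/K)` for all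
`K ≥ 1`. -/
theorem stmt_12 {E : Type*} [NormedAddCommGroup E] [InnerProductSpace ℝ E]
    [FiniteDimensional ℝ E]
    (X : E) (F : E → ℝ) (hF : ∀ W, F W = (1 / 2) * ‖X - W‖ ^ 2)
    (A : Set E) (hA : A.Nonempty) (hAc : IsCompact A) (hAs : ∀ M ∈ A, -M ∈ A)
    (μ β : ℝ) (hμ : μ ∈ Set.Ioc (0 : ℝ) 1) (hβ : 0 < β)
    (hsmooth : ∀ Δ ∈ Submodule.span ℝ A, ‖Δ‖ ≤ Real.sqrt β * atomicNorm A Δ)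
    (W : ℕ → E) (Msel : ℕ → E)
    (hW0 : W 0 = 0)
    (hMsel : ∀ k, Msel k ∈ A)
    (hgreedy : ∀ k, ⟪W k - X, Msel k⟫ ≤ μ * sInf ((fun M => ⟪W k - X, M⟫) '' A))
    (hmem : ∀ k, W (k + 1) ∈ Submodule.span ℝ (Msel '' Set.Iic k))
    (hcorr : ∀ k, ∀ W' ∈ Submodule.span ℝ (Msel '' Set.Iic k), F (W (k + 1)) ≤ F W')
    (Kbar : ℕ) (Matoms : Fin Kbar → E) (hinj : Function.Injective Matoms)
    (hMA : ∀ i, Matoms i ∈ A)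
    (γ : ℝ) (hγ : 0 < γ)
    (f : EuclideanSpace ℝ (Fin Kbar) → ℝ)
    (hfdef : ∀ c, f c = F (∑ i, c i • Matoms i))
    (hstrong : ∀ a b : EuclideanSpace ℝ (Fin Kbar),
      f a ≥ f b + ⟪gradient f b, a - b⟫ + (γ / 2) * ‖a - b‖ ^ 2)
    (cstar : EuclideanSpace ℝ (Fin Kbar)) (hcmin : ∀ c, f cstar ≤ f c)
    (Wstar : E) (hWstar : Wstar = ∑ i, cstar i • Matoms i) :
    ∀ K : ℕ, 1 ≤ K →
      F (W K) - F Wstar ≤ (2 * β * ‖X‖ ^ 2 / (γ * μ ^ 2)) * ((Kbar : ℝ) / (K : ℝ)) := by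
  obtain ⟨hμ0, hμ1⟩ := hμ
  set S : ℕ → Submodule ℝ E := fun k => Submodule.span ℝ (Msel '' Set.Iic k) with hS
  have hSmono : ∀ k, S k ≤ S (k+1) := by
    intro k
    exact Submodule.span_mono (Set.image_mono (Set.Iic_subset_Iic.mpr (Nat.le_succ k)))
  have hMselS : ∀ k, Msel k ∈ S k :=
    fun k => Submodule.subset_span ⟨k, Set.self_mem_Iic, rfl⟩
  have hWS : ∀ k, W k ∈ S k := by
    intro k
    cases k with
    | zero => rw [hW0]; exact (S 0).zero_mem
    | succ k => exact hSmono k (hmem k)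
  have hmono : ∀ k, F (W (k+1)) ≤ F (W k) := fun k => hcorr k (W k) (hWS k)
  have hmono0 : ∀ k, F (W k) ≤ F (W 0) := by
    intro k
    induction k with
    | zero => exact le_refl _
    | succ k ih => exact (hmono k).trans ih
  -- orthogonality of the residual to the current span
  have horth : ∀ k, ∀ v ∈ S k, ⟪W (k+1) - X, v⟫ = 0 := by
    intro k v hv
    apply quad_zero' _ (‖v‖^2) (by positivity)
    intro t
    have hmemv : W (k+1) + t • v ∈ S k := (S k).add_mem (hmem k) ((S k).smul_mem t hv)
    have h1 := hcorr k _ hmemv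
    have h2 := Fexp' X F hF (W (k+1)) (W (k+1) + t • v)
    rw [add_sub_cancel_left, real_inner_smul_right, norm_smul] at h2
    simp only [Real.norm_eq_abs, mul_pow, sq_abs] at h2
    nlinarith [h1, h2]
  have horthW : ∀ k, ⟪W k - X, W k⟫ = 0 := by
    intro k
    cases k with
    | zero => rw [hW0]; exact inner_zero_right _
    | succ k => exact horth k (W (k+1)) (hmem k)
  -- the greedy score
  set s : ℕ → ℝ := fun k => -sInf ((fun M => ⟪W k - X, M⟫) '' A) with hs
  have hbdd : ∀ k, BddBelow ((fun M => ⟪W k - X, M⟫) '' A) := by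
    intro k
    exact (hAc.image (continuous_const.inner continuous_id)).bddBelow
  have habs : ∀ k, ∀ M ∈ A, |⟪W k - X, M⟫| ≤ s k := by
    intro k M hM
    have h1 := csInf_le (hbdd k) ⟨M, hM, rfl⟩
    have h2 := csInf_le (hbdd k) ⟨-M, hAs M hM, rfl⟩
    simp only at h1 h2
    rw [inner_neg_right] at h2
    rw [abs_le]
    constructor <;> simp only [hs] <;> linarith
  have hs0 : ∀ k, 0 ≤ s k := by
    intro k
    obtain ⟨M, hM⟩ := hA
    exact (abs_nonneg _).trans (habs k M hM)
  -- atoms have norm² ≤ β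
  have hatom1 : ∀ M ∈ A, atomicNorm A M ≤ 1 := by
    intro M hM
    apply csInf_le
    · refine ⟨0, fun x hx => ?_⟩
      obtain ⟨n, c, Ms, _, _, hsx⟩ := hx
      rw [hsx]; positivity
    · exact ⟨1, fun _ => 1, fun _ => M, fun _ => hM, by simp, by simp⟩
  have hMsq : ∀ M ∈ A, ‖M‖^2 ≤ β := by
    intro M hM
    have h1 := hsmooth M (Submodule.subset_span hM)
    have h2 : Real.sqrt β * atomicNorm A M ≤ Real.sqrt β * 1 :=
      mul_le_mul_of_nonneg_left (hatom1 M hM) (Real.sqrt_nonneg β)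
    nlinarith [Real.sq_sqrt hβ.le, Real.sqrt_nonneg β, norm_nonneg M]
  -- the per-step decrease
  have hstep : ∀ k, F (W (k+1)) ≤ F (W k) - μ^2 * (s k)^2 / (2*β) := by
    intro k
    set t := μ * s k / β with ht
    have ht0 : 0 ≤ t := by
      rw [ht]; exact div_nonneg (mul_nonneg hμ0.le (hs0 k)) hβ.le
    have hmemv : W k + t • Msel k ∈ S k :=
      (S k).add_mem (hWS k) ((S k).smul_mem t (hMselS k))
    have h1 := hcorr k _ hmemv
    have h2 := Fexp' X F hF (W k) (W k + t • Msel k)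
    rw [add_sub_cancel_left, real_inner_smul_right, norm_smul] at h2
    simp only [Real.norm_eq_abs, mul_pow, sq_abs] at h2
    have hg := hgreedy k
    have hsInf : μ * sInf ((fun M => ⟪W k - X, M⟫) '' A) = -(μ * s k) := by
      simp only [hs]; ring
    rw [hsInf] at hg
    have hMb : ‖Msel k‖^2 ≤ β := hMsq _ (hMsel k)
    have e1 : t * ⟪W k - X, Msel k⟫ ≤ t * (-(μ * s k)) :=
      mul_le_mul_of_nonneg_left hg ht0
    have e2 : (1/2) * (t^2 * ‖Msel k‖^2) ≤ t^2 * β / 2 := by nlinarith [sq_nonneg t]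
    have e3 : t * (-(μ * s k)) + t^2 * β / 2 = -(μ^2 * (s k)^2 / (2*β)) := by
      rw [ht]; field_simp; ring
    nlinarith [h1, h2, e1, e2, e3]
  -- properties of f, cstar
  have hFnn : ∀ v, 0 ≤ F v := by intro v; rw [hF]; positivity
  have hfc : f cstar = F Wstar := by rw [hfdef, hWstar]
  have hF0 : F 0 = (1/2) * ‖X‖^2 := by rw [hF]; simp
  have hf0 : f 0 = F 0 := by
    rw [hfdef]
    congr 1
    simp
  have hgrad0 : gradient f cstar = 0 := by
    have hmin : IsLocalMin f cstar := Filter.Eventually.of_forall fun c => hcmin c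
    have hfd : fderiv ℝ f cstar = 0 := hmin.fderiv_eq_zero
    unfold gradient
    rw [hfd, map_zero]
  have hcsq : ‖cstar‖^2 ≤ ‖X‖^2 / γ := by
    have h := hstrong 0 cstar
    rw [hgrad0, inner_zero_left] at h
    rw [zero_sub, norm_neg] at h
    have hfW : 0 ≤ f cstar := hfc ▸ hFnn Wstar
    rw [le_div_iff₀ hγ]
    nlinarith [h, hf0, hF0]
  -- ℓ1–ℓ2 comparison
  have hl2 : ∑ i, (cstar i)^2 = ‖cstar‖^2 := by
    rw [EuclideanSpace.norm_eq, Real.sq_sqrt (by positivity)]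
    simp [Real.norm_eq_abs, sq_abs]
  have hl1 : (∑ i, |cstar i|)^2 ≤ (Kbar : ℝ) * (‖X‖^2 / γ) := by
    have h1 : (∑ i, |cstar i|)^2 ≤ (Finset.univ : Finset (Fin Kbar)).card * ∑ i, |cstar i|^2 :=
      sq_sum_le_card_mul_sum_sq
    simp only [Finset.card_univ, Fintype.card_fin, sq_abs] at h1
    have h2 : ∑ i, (cstar i)^2 ≤ ‖X‖^2/γ := hl2 ▸ hcsq
    have hKnn : (0:ℝ) ≤ (Kbar:ℝ) := Nat.cast_nonneg _
    exact h1.trans (mul_le_mul_of_nonneg_left h2 hKnn)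
  -- the gap bound
  have hgap : ∀ k, F (W k) - F Wstar ≤ s k * ∑ i, |cstar i| := by
    intro k
    have h2 := Fexp' X F hF (W k) Wstar
    have h3 : ⟪W k - X, Wstar - W k⟫ = ⟪W k - X, Wstar⟫ := by
      rw [inner_sub_right, horthW k]; ring
    have h4 : -⟪W k - X, Wstar⟫ ≤ s k * ∑ i, |cstar i| := by
      rw [hWstar, inner_sum]
      simp_rw [real_inner_smul_right]
      rw [← Finset.sum_neg_distrib]
      calc ∑ i, -(cstar i * ⟪W k - X, Matoms i⟫)
          ≤ ∑ i, |cstar i| * s k := by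
            apply Finset.sum_le_sum
            intro i _
            calc -(cstar i * ⟪W k - X, Matoms i⟫) ≤ |cstar i * ⟪W k - X, Matoms i⟫| :=
                  neg_le_abs _
              _ = |cstar i| * |⟪W k - X, Matoms i⟫| := abs_mul _ _
              _ ≤ |cstar i| * s k :=
                  mul_le_mul_of_nonneg_left (habs k _ (hMA i)) (abs_nonneg _)
        _ = s k * ∑ i, |cstar i| := by rw [← Finset.sum_mul]; ring
    have hnn : 0 ≤ (1/2) * ‖Wstar - W k‖^2 := by positivity
    linarith [h2, h3, h4, hnn]
  -- main case split
  intro K hK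
  have hKpos : (0:ℝ) < (K:ℝ) := by exact_mod_cast hK
  by_cases hdeg : Kbar = 0 ∨ ‖X‖ = 0
  · have hle : F (W K) - F Wstar ≤ 0 := by
      rcases hdeg with h0 | h0
      · have hWs0 : Wstar = 0 := by
          subst h0
          rw [hWstar]
          simp
        have h1 : F (W K) ≤ F (W 0) := hmono0 K
        rw [hW0] at h1
        rw [hWs0]
        linarith
      · have hX0 : X = 0 := norm_eq_zero.mp h0
        have h1 : F (W K) ≤ F (W 0) := hmono0 K
        rw [hW0, hF0, h0] at h1
        have h2 : 0 ≤ F Wstar := hFnn Wstar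
        nlinarith
    have hrhs : 0 ≤ (2 * β * ‖X‖ ^ 2 / (γ * μ ^ 2)) * ((Kbar : ℝ) / (K : ℝ)) := by positivity
    linarith
  · push_neg at hdeg
    obtain ⟨hKb, hX⟩ := hdeg
    have hKb' : (0:ℝ) < (Kbar:ℝ) := by exact_mod_cast Nat.pos_of_ne_zero hKb
    have hX2 : (0:ℝ) < ‖X‖^2 := by positivity
    set C := γ * μ^2 / (2 * β * (Kbar:ℝ) * ‖X‖^2) with hC
    have hCpos : 0 < C := by positivity
    -- recursion
    have hrec : ∀ k, 0 ≤ F (W k) - F Wstar →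
        F (W (k+1)) - F Wstar ≤ (F (W k) - F Wstar) - C * (F (W k) - F Wstar)^2 := by
      intro k hk
      have h1 := hstep k
      have h2 := hgap k
      have h3 := hl1
      have hsk := hs0 k
      -- (h_k)² ≤ s_k² * Kbar * ‖X‖²/γ
      set L := ∑ i, |cstar i| with hLdef
      have hL : 0 ≤ L := Finset.sum_nonneg fun i _ => abs_nonneg _
      have h4 : (F (W k) - F Wstar)^2 ≤ (s k)^2 * ((Kbar:ℝ) * (‖X‖^2/γ)) := by
        have e1 : (F (W k) - F Wstar) * (F (W k) - F Wstar) ≤ (s k * L) * (s k * L) :=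
          mul_le_mul h2 h2 hk (mul_nonneg hsk hL)
        have e2 : (s k)^2 * L^2 ≤ (s k)^2 * ((Kbar:ℝ) * (‖X‖^2/γ)) :=
          mul_le_mul_of_nonneg_left h3 (sq_nonneg _)
        calc (F (W k) - F Wstar)^2 = (F (W k) - F Wstar) * (F (W k) - F Wstar) := sq _
          _ ≤ (s k * L) * (s k * L) := e1
          _ = (s k)^2 * L^2 := by ring
          _ ≤ (s k)^2 * ((Kbar:ℝ) * (‖X‖^2/γ)) := e2
      have h5 : C * (F (W k) - F Wstar)^2 ≤ μ^2 * (s k)^2 / (2*β) := by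
        have e3 : C * (F (W k) - F Wstar)^2 ≤ C * ((s k)^2 * ((Kbar:ℝ) * (‖X‖^2/γ))) :=
          mul_le_mul_of_nonneg_left h4 hCpos.le
        have e4 : C * ((s k)^2 * ((Kbar:ℝ) * (‖X‖^2/γ))) = μ^2 * (s k)^2 / (2*β) := by
          rw [hC]
          field_simp
        linarith [e3, e4.le, e4.ge]
      linarith [h1, h5]
    have hinv : ∀ K : ℕ, 0 < F (W K) - F Wstar → C * K ≤ 1 / (F (W K) - F Wstar) := by
      intro K
      induction K with
      | zero =>
        intro h0
        simp only [Nat.cast_zero, mul_zero]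
        positivity
      | succ K ih =>
        intro hpos
        have hKx : 0 < F (W K) - F Wstar := lt_of_lt_of_le hpos (by linarith [hmono K])
        have ihh := ih hKx
        have hr := hrec K hKx.le
        set x := F (W K) - F Wstar with hx
        set y := F (W (K+1)) - F Wstar with hy
        have hxy : 0 < x - C * x^2 := lt_of_lt_of_le hpos hr
        have h5 : 1/x + C ≤ 1/(x - C * x^2) := by
          rw [div_add' _ _ _ (ne_of_gt hKx), div_le_div_iff₀ hKx hxy]
          nlinarith [hCpos, hKx, sq_nonneg (C*x)]
        have h6 : 1/(x - C * x^2) ≤ 1/y := one_div_le_one_div_of_le hpos hr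
        push_cast
        nlinarith [ihh, h5, h6]
    rcases le_or_gt (F (W K) - F Wstar) 0 with hle | hpos
    · have hrhs : 0 ≤ (2 * β * ‖X‖ ^ 2 / (γ * μ ^ 2)) * ((Kbar : ℝ) / (K : ℝ)) := by positivity
      linarith
    · have h1 := hinv K hpos
      have hCK : 0 < C * K := by positivity
      have h2 : F (W K) - F Wstar ≤ 1 / (C * K) := by
        rw [le_div_iff₀ hCK]
        calc (F (W K) - F Wstar) * (C * K) ≤ (1 / (F (W K) - F Wstar)) * (F (W K) - F Wstar) := by
              rw [mul_comm]
              exact mul_le_mul_of_nonneg_right h1 hpos.le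
          _ = 1 := by field_simp
      have h3 : 1 / (C * (K:ℝ)) = (2 * β * ‖X‖ ^ 2 / (γ * μ ^ 2)) * ((Kbar : ℝ) / (K : ℝ)) := by
        rw [hC]
        field_simp
      linarith [h2, h3.le]
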